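/- arXiv:2404.03767 — 3 statements merged into one kernel-verified Lean document; each statement's English description precedes it below -/
import Mathlib

section
/- Let C = ⋂_{i ∈ [l]} H^i be a nonempty intersection of closed halfspaces H^i = {x ∈ ℝⁿ : ⟨a^i, x⟩ ≥ c^i}, and let x ∈ C. Then the dual cone of C − x equals the conic hull of {a^i : i ∈ A(x)}, where A(x) = {i : ⟨a^i, x⟩ = c^i} is the set of active constraint indices at x. -/
open scoped RealInnerProductSpace
open Finset

/-- A finitely generated cone (generators indexed by a finset) is closed. -/
lemma isClosed_coneOn {n m : ℕ} (v : Fin m → EuclideanSpace ℝ (Fin n)) (s : Finset (Fin m)) :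
    IsClosed {x : EuclideanSpace ℝ (Fin n) |
      ∃ t : Fin m → ℝ, (∀ i, 0 ≤ t i) ∧ (∀ i ∉ s, t i = 0) ∧ x = ∑ i ∈ s, t i • v i} := by
  induction s using Finset.strongInduction with
  | _ s ih =>
  by_cases hli : LinearIndependent ℝ (fun i : s => v i)
  · -- linearly independent generators: closed embedding of the nonnegative orthant
    set L : (s → ℝ) →ₗ[ℝ] EuclideanSpace ℝ (Fin n) :=
      Fintype.linearCombination ℝ (fun i : s => v i) with hL
    have hinj : LinearMap.ker L = ⊥ := by
      rw [LinearMap.ker_eq_bot]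
      intro f g hfg
      have h0 : L (f - g) = 0 := by rw [map_sub, hfg, sub_self]
      rw [hL, Fintype.linearCombination_apply] at h0
      have := Fintype.linearIndependent_iff.mp hli (f - g) h0
      funext i; have := this i; simpa [sub_eq_zero] using this
    have hce := LinearMap.isClosedEmbedding_of_injective (𝕜 := ℝ) hinj
    have hclosed : IsClosed {t : s → ℝ | ∀ i, 0 ≤ t i} := by
      have : {t : s → ℝ | ∀ i, 0 ≤ t i} = ⋂ i, {t : s → ℝ | 0 ≤ t i} := by
        ext t; simp [Set.mem_iInter]
      rw [this]
      exact isClosed_iInter fun i => isClosed_le continuous_const (continuous_apply i)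
    have himg : {x : EuclideanSpace ℝ (Fin n) |
        ∃ t : Fin m → ℝ, (∀ i, 0 ≤ t i) ∧ (∀ i ∉ s, t i = 0) ∧ x = ∑ i ∈ s, t i • v i}
        = L '' {t : s → ℝ | ∀ i, 0 ≤ t i} := by
      ext x
      constructor
      · rintro ⟨t, ht0, -, rfl⟩
        refine ⟨fun i => t i, fun i => ht0 i, ?_⟩
        rw [hL, Fintype.linearCombination_apply]
        exact (Finset.sum_coe_sort s (fun i => t i • v i))
      · rintro ⟨u, hu, rfl⟩
        refine ⟨fun i => if h : i ∈ s then u ⟨i, h⟩ else 0, ?_, ?_, ?_⟩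
        · intro i
          by_cases h : i ∈ s
          · simpa [h] using hu ⟨i, h⟩
          · simp [h]
        · intro i hi; simp [hi]
        · rw [hL, Fintype.linearCombination_apply,
            ← Finset.sum_coe_sort s (fun i => (if h : i ∈ s then u ⟨i, h⟩ else 0) • v i)]
          exact Finset.sum_congr rfl fun i _ => by simp [i.2]
    rw [himg]
    exact hce.isClosedMap _ hclosed
  · -- dependent generators: the cone is a finite union of smaller cones
    obtain ⟨g, hg0, j0, hj0⟩ := Fintype.not_linearIndependent_iff.mp hli
    classical
    -- extend to coefficients on Fin m, with some negative coefficient (wlog)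
    obtain ⟨c, hcs, hrel, j1, hj1s, hj1⟩ :
        ∃ c : Fin m → ℝ, (∀ i ∉ s, c i = 0) ∧ (∑ i ∈ s, c i • v i = 0) ∧
          ∃ j ∈ s, c j < 0 := by
      rcases lt_or_gt_of_ne hj0 with h | h
      · refine ⟨fun i => if h : i ∈ s then g ⟨i, h⟩ else 0, fun i hi => by simp [hi], ?_,
          j0, j0.2, by simpa [j0.2] using h⟩
        rw [← Finset.sum_coe_sort s (fun i => (if h : i ∈ s then g ⟨i, h⟩ else 0) • v i)]
        rw [← hg0]
        exact Finset.sum_congr rfl fun i _ => by simp [i.2]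
      · refine ⟨fun i => if h : i ∈ s then -g ⟨i, h⟩ else 0, fun i hi => by simp [hi], ?_,
          j0, j0.2, by simpa [j0.2] using h⟩
        rw [← Finset.sum_coe_sort s (fun i => (if h : i ∈ s then -g ⟨i, h⟩ else 0) • v i)]
        have : ∑ i : s, (-g i) • v i = 0 := by
          simp only [neg_smul, Finset.sum_neg_distrib]
          rw [hg0, neg_zero]
        rw [← this]
        exact Finset.sum_congr rfl fun i _ => by simp [i.2]
    have key : {x : EuclideanSpace ℝ (Fin n) |
        ∃ t : Fin m → ℝ, (∀ i, 0 ≤ t i) ∧ (∀ i ∉ s, t i = 0) ∧ x = ∑ i ∈ s, t i • v i}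
        = ⋃ j ∈ s, {x : EuclideanSpace ℝ (Fin n) |
          ∃ t : Fin m → ℝ, (∀ i, 0 ≤ t i) ∧ (∀ i ∉ s.erase j, t i = 0) ∧
            x = ∑ i ∈ s.erase j, t i • v i} := by
      ext x
      simp only [Set.mem_iUnion, Set.mem_setOf_eq]
      constructor
      · rintro ⟨t, ht0, hts, rfl⟩
        -- shift t along the relation c to kill one coordinate
        set neg : Finset (Fin m) := s.filter (fun i => c i < 0) with hneg
        have hnegne : neg.Nonempty := ⟨j1, by simpa [hneg] using ⟨hj1s, hj1⟩⟩
        set lam : ℝ := neg.inf' hnegne (fun i => t i / (-c i)) with hlam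
        obtain ⟨j, hjneg, hjeq⟩ := Finset.exists_mem_eq_inf' hnegne (fun i => t i / (-c i))
        have hjs : j ∈ s := (Finset.mem_filter.mp hjneg).1
        have hcj : c j < 0 := (Finset.mem_filter.mp hjneg).2
        have hlam0 : 0 ≤ lam := by
          rw [hlam]
          apply Finset.le_inf'
          intro i hi
          have hci : c i < 0 := (Finset.mem_filter.mp hi).2
          exact div_nonneg (ht0 i) (by linarith)
        set t' : Fin m → ℝ := fun i => t i + lam * c i with ht'
        have ht'0 : ∀ i, 0 ≤ t' i := by
          intro i
          by_cases hci : c i < 0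
          · have his : i ∈ s := by
              by_contra his; exact absurd (hcs i his) (ne_of_lt hci)
            have hile : lam ≤ t i / (-c i) :=
              Finset.inf'_le _ (by simp [hneg, his, hci])
            have : lam * (-c i) ≤ t i := by
              rw [← div_mul_cancel₀ (t i) (show -c i ≠ 0 by linarith)]
              exact mul_le_mul_of_nonneg_right hile (by linarith)
            show 0 ≤ t i + lam * c i
            nlinarith
          · push_neg at hci
            show 0 ≤ t i + lam * c i
            have h1 := ht0 i
            have h2 := mul_nonneg hlam0 hci
            linarith
        have ht'j : t' j = 0 := by
          show t j + lam * c j = 0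
          rw [hlam, hjeq]
          have hne : c j ≠ 0 := ne_of_lt hcj
          field_simp
          ring
        refine ⟨j, hjs, t', ht'0, ?_, ?_⟩
        · intro i hi
          rcases Finset.mem_erase.not.mp hi with h
          push_neg at h
          by_cases his : i ∈ s
          · have : i = j := by
              by_contra hne
              exact hi (Finset.mem_erase.mpr ⟨hne, his⟩)
            rw [this]; exact ht'j
          · simp [ht', hts i his, hcs i his]
        · rw [Finset.sum_erase _ (by rw [ht'j]; exact zero_smul ℝ _)]
          simp only [ht', add_smul, mul_smul]
          rw [Finset.sum_add_distrib, ← Finset.smul_sum, hrel, smul_zero, add_zero]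
      · rintro ⟨j, hjs, t, ht0, hts, rfl⟩
        refine ⟨t, ht0, fun i hi => hts i fun h => hi (Finset.mem_of_mem_erase h), ?_⟩
        rw [Finset.sum_subset (Finset.erase_subset j s)]
        intro i his hie
        rw [hts i hie, zero_smul]
    rw [key]
    exact isClosed_biUnion_finset fun j hj => ih _ (Finset.erase_ssubset hj)

/-- The dual cone of a set `S`: all `v` with `⟪v, d⟫ ≥ 0` for all `d ∈ S`. -/
def dualCone {n : ℕ} (S : Set (EuclideanSpace ℝ (Fin n))) : Set (EuclideanSpace ℝ (Fin n)) :=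
  {v | ∀ d ∈ S, 0 ≤ ⟪v, d⟫}

/-- The dual cone of `C - x`, for `C` a nonempty intersection of closed halfspaces and
`x ∈ C`, is the conic hull of the active constraint normals. -/
theorem dualCone_polyhedron_sub {n l : ℕ} (a : Fin l → EuclideanSpace ℝ (Fin n))
    (c : Fin l → ℝ)
    (hC : (⋂ i, {y : EuclideanSpace ℝ (Fin n) | c i ≤ ⟪a i, y⟫}).Nonempty)
    (x : EuclideanSpace ℝ (Fin n))
    (hx : x ∈ ⋂ i, {y : EuclideanSpace ℝ (Fin n) | c i ≤ ⟪a i, y⟫}) :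
    dualCone ((fun y => y - x) '' ⋂ i, {y : EuclideanSpace ℝ (Fin n) | c i ≤ ⟪a i, y⟫}) =
      {v | ∃ t : Fin l → ℝ, (∀ i, 0 ≤ t i) ∧ (∀ i, ⟪a i, x⟫ ≠ c i → t i = 0) ∧
        v = ∑ i, t i • a i} := by
  classical
  set Kset : Set (EuclideanSpace ℝ (Fin n)) :=
    {v | ∃ t : Fin l → ℝ, (∀ i, 0 ≤ t i) ∧ (∀ i, ⟪a i, x⟫ ≠ c i → t i = 0) ∧
      v = ∑ i, t i • a i} with hKdef
  -- `Kset` as a convex cone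
  set K : ConvexCone ℝ (EuclideanSpace ℝ (Fin n)) :=
    { carrier := Kset
      smul_mem' := by
        rintro r hr v ⟨t, ht0, hta, rfl⟩
        exact ⟨fun i => r * t i, fun i => mul_nonneg hr.le (ht0 i),
          fun i hi => by simp only []; rw [hta i hi, mul_zero],
          by rw [Finset.smul_sum]; exact Finset.sum_congr rfl fun i _ => (mul_smul r (t i) (a i)).symm⟩
      add_mem' := by
        rintro u ⟨t, ht0, hta, rfl⟩ v ⟨r, hr0, hra, rfl⟩
        exact ⟨fun i => t i + r i, fun i => add_nonneg (ht0 i) (hr0 i),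
          fun i hi => by simp only []; rw [hta i hi, hra i hi, add_zero],
          by rw [← Finset.sum_add_distrib]; exact Finset.sum_congr rfl fun i _ => (add_smul _ _ _).symm⟩ }
    with hKcone
  have hKco : (K : Set (EuclideanSpace ℝ (Fin n))) = Kset := rfl
  have hKne : (K : Set (EuclideanSpace ℝ (Fin n))).Nonempty :=
    ⟨0, ⟨fun _ => 0, fun i => le_refl 0, fun i _ => rfl, by simp⟩⟩
  -- `Kset` is closed
  have hKclosed : IsClosed (K : Set (EuclideanSpace ℝ (Fin n))) := by
    rw [hKco]
    have : Kset = {w : EuclideanSpace ℝ (Fin n) |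
        ∃ t : Fin l → ℝ, (∀ i, 0 ≤ t i) ∧
          (∀ i ∉ Finset.univ.filter (fun i => ⟪a i, x⟫ = c i), t i = 0) ∧
          w = ∑ i ∈ Finset.univ.filter (fun i => ⟪a i, x⟫ = c i), t i • a i} := by
      ext w
      constructor
      · rintro ⟨t, ht0, hta, rfl⟩
        refine ⟨t, ht0, fun i hi => hta i (by simpa using hi), ?_⟩
        rw [Finset.sum_subset (Finset.filter_subset _ _)]
        intro i _ hi
        rw [hta i (by simpa using hi), zero_smul]
      · rintro ⟨t, ht0, hta, rfl⟩
        refine ⟨t, ht0, fun i hi => hta i (by simpa using hi), ?_⟩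
        rw [Finset.sum_subset (Finset.filter_subset _ _)]
        intro i _ hi
        rw [hta i (by simpa using hi), zero_smul]
    rw [this]
    exact isClosed_coneOn a _
  have hdd : ((ProperCone.innerDual ((ProperCone.innerDual (K : Set (EuclideanSpace ℝ (Fin n)))) :
      Set (EuclideanSpace ℝ (Fin n)))) : Set (EuclideanSpace ℝ (Fin n))) = K := by
    have hpt : K.Pointed := ⟨fun _ => 0, fun i => le_refl 0, fun i _ => rfl, by simp⟩
    let C : ProperCone ℝ (EuclideanSpace ℝ (Fin n)) :=
      { toSubmodule := K.toPointedCone hpt, isClosed' := hKclosed }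
    have := ProperCone.innerDual_innerDual C
    exact congrArg (fun P : ProperCone ℝ (EuclideanSpace ℝ (Fin n)) =>
      (P : Set (EuclideanSpace ℝ (Fin n)))) this
  ext v
  constructor
  · -- hard direction
    intro hv
    have : v ∈ ((ProperCone.innerDual ((ProperCone.innerDual (K : Set (EuclideanSpace ℝ (Fin n)))) :
        Set (EuclideanSpace ℝ (Fin n)))) : Set (EuclideanSpace ℝ (Fin n))) := by
      rw [SetLike.mem_coe, ProperCone.mem_innerDual]
      intro d hd
      rw [SetLike.mem_coe, ProperCone.mem_innerDual] at hd
      -- active normals pair nonnegatively with d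
      have had : ∀ i, ⟪a i, x⟫ = c i → 0 ≤ ⟪a i, d⟫ := by
        intro i hi
        refine @hd (a i) ⟨fun j => if j = i then 1 else 0, ?_, ?_, ?_⟩
        · intro j; by_cases h : j = i <;> simp [h]
        · intro j hj
          by_cases h : j = i
          · exact absurd (h ▸ hi) hj
          · simp [h]
        · simp [ite_smul]
      -- for small positive ε, x + ε • d stays in C
      have hev : ∀ᶠ ε in nhdsWithin (0:ℝ) (Set.Ioi 0),
          ∀ i, c i ≤ ⟪a i, x + ε • d⟫ := by
        rw [Filter.eventually_all]
        intro i
        have hxi : c i ≤ ⟪a i, x⟫ := Set.mem_iInter.mp hx i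
        by_cases hact : ⟪a i, x⟫ = c i
        · filter_upwards [self_mem_nhdsWithin] with ε hε
          have hε' : (0:ℝ) < ε := hε
          rw [inner_add_right, real_inner_smul_right, hact]
          have := mul_nonneg hε'.le (had i hact)
          linarith
        · have hlt : c i < ⟪a i, x⟫ := lt_of_le_of_ne hxi (Ne.symm hact)
          have hcont : Filter.Tendsto (fun ε : ℝ => ⟪a i, x⟫ + ε * ⟪a i, d⟫)
              (nhds 0) (nhds (⟪a i, x⟫ + 0 * ⟪a i, d⟫)) := by
            exact Filter.Tendsto.add tendsto_const_nhds
              (Filter.Tendsto.mul Filter.tendsto_id tendsto_const_nhds)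
          have h0 : ∀ᶠ ε in nhds (0:ℝ), c i < ⟪a i, x⟫ + ε * ⟪a i, d⟫ := by
            apply hcont.eventually
            apply eventually_gt_nhds
            simpa using hlt
          filter_upwards [nhdsWithin_le_nhds h0] with ε hε
          rw [inner_add_right, real_inner_smul_right]
          exact hε.le
      obtain ⟨ε, hεC, hεpos⟩ := (hev.and self_mem_nhdsWithin).exists
      have hmem : ε • d ∈ (fun y => y - x) ''
          ⋂ i, {y : EuclideanSpace ℝ (Fin n) | c i ≤ ⟪a i, y⟫} :=
        ⟨x + ε • d, Set.mem_iInter.mpr fun i => hεC i, by simp⟩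
      have h1 : 0 ≤ ⟪v, ε • d⟫ := hv (ε • d) hmem
      rw [real_inner_smul_right] at h1
      have hεpos' : (0:ℝ) < ε := hεpos
      have h2 : 0 ≤ ⟪v, d⟫ := nonneg_of_mul_nonneg_right h1 hεpos'
      rwa [real_inner_comm]
    rw [hdd] at this
    exact this
  · -- easy direction
    rintro ⟨t, ht0, hta, rfl⟩ d ⟨y, hy, rfl⟩
    rw [sum_inner]
    apply Finset.sum_nonneg
    intro i _
    rw [real_inner_smul_left]
    by_cases hact : ⟪a i, x⟫ = c i
    · have hyi : c i ≤ ⟪a i, y⟫ := Set.mem_iInter.mp hy i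
      have : 0 ≤ ⟪a i, y - x⟫ := by
        rw [inner_sub_right, hact]
        linarith
      exact mul_nonneg (ht0 i) this
    · rw [hta i hact, zero_mul]
end

section
/- Let f(x,w) be convex and quadratic in x for each w, with ∇_x f(x,w) = Qx + Rw + q affine, and let C = ⋂_{i ∈ [l]} {(x,w) : ⟨x,a^i⟩ + ⟨w,b^i⟩ ≥ c^i} be a closed nonempty polyhedron in ℝⁿ × ℝᵐ. Then the solution graph S = {(x,w) ∈ C : x is a (global) minimizer of f(·,w) over C_w} equals the union over all subsets L ⊆ [l] of the sets {(x,w) ∈ C : ⟨x,a^i⟩ + ⟨w,b^i⟩ = c^i for all i ∈ L, and ∇_x f(x,w) ∈ coni({a^i}_{i ∈ L})}. In particular, S is a finite union of polyhedral sets. -/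
open scoped RealInnerProductSpace
open Filter Topology Finset

section Helpers

/-- For a convex function on ℝ differentiable at 0, the derivative is at most the slope to 1. -/
lemma qpAux_deriv_le_sub_of_convexOn {φ : ℝ → ℝ} {D : ℝ} (hφ : ConvexOn ℝ Set.univ φ)
    (hD : HasDerivAt φ D 0) : D ≤ φ 1 - φ 0 := by
  have ht : Tendsto (slope φ 0) (𝓝[>] 0) (𝓝 D) :=
    (hasDerivAt_iff_tendsto_slope.1 hD).mono_left
      (nhdsWithin_mono _ (by intro s hs; exact ne_of_gt hs))
  refine le_of_tendsto ht ?_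
  filter_upwards [Ioo_mem_nhdsGT_of_mem (by norm_num : (0:ℝ) ∈ Set.Ico 0 1)] with s hs
  have := hφ.secant_mono (a := 0) (x := s) (y := 1) trivial trivial trivial
    (ne_of_gt hs.1) one_ne_zero hs.2.le
  simpa [slope_def_field, div_eq_mul_inv] using this.trans_eq (by ring)

lemma qpAux_deriv_nonneg_of_eventually_min {φ : ℝ → ℝ} {D : ℝ} (hD : HasDerivAt φ D 0)
    (h : ∀ᶠ s in 𝓝[>] (0:ℝ), φ 0 ≤ φ s) : 0 ≤ D := by
  have ht : Tendsto (slope φ 0) (𝓝[>] 0) (𝓝 D) :=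
    (hasDerivAt_iff_tendsto_slope.1 hD).mono_left
      (nhdsWithin_mono _ (by intro s hs; exact ne_of_gt hs))
  refine ge_of_tendsto ht ?_
  filter_upwards [h, self_mem_nhdsWithin] with s hs hs0
  rw [slope_def_field]
  exact div_nonneg (by linarith) (by simpa using (le_of_lt hs0))

/-- Carathéodory for cones. -/
lemma qpAux_cone_caratheodory {ι : Type*} [Fintype ι] [DecidableEq ι] {H : Type*} [AddCommGroup H]
    [Module ℝ H] (a : ι → H) (s : Finset ι) :
    ∀ t : ι → ℝ, (∀ i, 0 ≤ t i) → (∀ i ∉ s, t i = 0) →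
    ∃ s' : Finset ι, s' ⊆ s ∧ LinearIndependent ℝ (fun i : s' => a i) ∧
      ∃ u : ι → ℝ, (∀ i, 0 ≤ u i) ∧ (∀ i ∉ s', u i = 0) ∧
        ∑ i, u i • a i = ∑ i, t i • a i := by
  induction s using Finset.strongInductionOn with
  | _ s ih =>
    intro t ht0 hts
    by_cases hli : LinearIndependent ℝ (fun i : s => a i)
    · exact ⟨s, Finset.Subset.refl s, hli, t, ht0, hts, rfl⟩
    · obtain ⟨g, hgsum, j, hgj⟩ := Fintype.not_linearIndependent_iff.1 hli
      obtain ⟨G, hGsum, hGs, j', hj's, hj'pos⟩ :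
          ∃ G : ι → ℝ, ∑ i ∈ s, G i • a i = 0 ∧ (∀ i ∉ s, G i = 0) ∧
            ∃ j' ∈ s, 0 < G j' := by
        rcases lt_or_ge 0 (g j) with hpos | hneg
        · refine ⟨fun i => if h : i ∈ s then g ⟨i, h⟩ else 0, ?_, fun i hi => dif_neg hi,
            j, j.2, by simpa [j.2] using hpos⟩
          rw [← Finset.sum_attach s fun i => (if h : i ∈ s then g ⟨i, h⟩ else 0) • a i,
            ← hgsum, Finset.univ_eq_attach]
          exact Finset.sum_congr rfl fun i _ => by simp [i.2]
        · refine ⟨fun i => if h : i ∈ s then -g ⟨i, h⟩ else 0, ?_, fun i hi => dif_neg hi,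
            j, j.2, by simpa [j.2] using neg_pos.2 (hneg.lt_of_ne hgj)⟩
          rw [← Finset.sum_attach s fun i => (if h : i ∈ s then -g ⟨i, h⟩ else 0) • a i]
          have : ∑ i ∈ s.attach, (if h : (i : ι) ∈ s then -g ⟨i, h⟩ else 0) • a (i : ι)
              = -∑ i ∈ s.attach, g i • a (i : ι) := by
            rw [← Finset.sum_neg_distrib]
            exact Finset.sum_congr rfl fun i _ => by simp [i.2, neg_smul]
          rw [this, ← Finset.univ_eq_attach, hgsum, neg_zero]
      classical
      set P := s.filter (fun i => 0 < G i) with hP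
      have hPne : P.Nonempty := ⟨j', Finset.mem_filter.2 ⟨hj's, hj'pos⟩⟩
      obtain ⟨i₀, hi₀P, hmin⟩ := P.exists_min_image (fun i => t i / G i) hPne
      have hi₀s : i₀ ∈ s := (Finset.mem_filter.1 hi₀P).1
      have hGi₀ : 0 < G i₀ := (Finset.mem_filter.1 hi₀P).2
      set r := t i₀ / G i₀ with hr
      have hr0 : 0 ≤ r := div_nonneg (ht0 i₀) hGi₀.le
      set u : ι → ℝ := fun i => t i - r * G i with hu
      have hu0 : ∀ i, 0 ≤ u i := by
        intro i
        by_cases hi : i ∈ s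
        · by_cases hGi : 0 < G i
          · have := hmin i (Finset.mem_filter.2 ⟨hi, hGi⟩)
            have := (le_div_iff₀ hGi).1 this
            simp only [hu]; linarith
          · have : r * G i ≤ 0 := mul_nonpos_of_nonneg_of_nonpos hr0 (le_of_not_gt hGi)
            have := ht0 i
            simp only [hu]; linarith
        · simp [hu, hts i hi, hGs i hi]
      have huz : ∀ i ∉ s.erase i₀, u i = 0 := by
        intro i hi
        by_cases h : i = i₀
        · subst h; simp only [hu, hr]; field_simp; ring
        · have hns : i ∉ s := fun hin => hi (Finset.mem_erase.2 ⟨h, hin⟩)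
          simp [hu, hts i hns, hGs i hns]
      have hGuniv : ∑ i, G i • a i = 0 := by
        rw [← Finset.sum_subset (Finset.subset_univ s)
          (fun i _ hi => by rw [hGs i hi, zero_smul])]
        exact hGsum
      have husum : ∑ i, u i • a i = ∑ i, t i • a i := by
        have : ∀ i, u i • a i = t i • a i - r • (G i • a i) := by
          intro i; simp only [hu, sub_smul, smul_smul]
        simp only [this, Finset.sum_sub_distrib, ← Finset.smul_sum, hGuniv, smul_zero, sub_zero]
      obtain ⟨s', hs'sub, hs'li, v, hv0, hvz, hvsum⟩ :=
        ih (s.erase i₀) (Finset.erase_ssubset hi₀s) u hu0 huz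
      exact ⟨s', hs'sub.trans (Finset.erase_subset _ _), hs'li, v, hv0, hvz,
        hvsum.trans husum⟩

variable {ι : Type*} [Fintype ι] {H : Type*} [NormedAddCommGroup H] [InnerProductSpace ℝ H]
  [FiniteDimensional ℝ H]

/-- The cone generated by `a i`, `i ∈ A`. -/
def qpConeSet (a : ι → H) (A : Set ι) : Set H :=
  {x : H | ∃ t : ι → ℝ, (∀ i, 0 ≤ t i) ∧ (∀ i ∉ A, t i = 0) ∧ x = ∑ i, t i • a i}

lemma qpAux_isClosed_coneSet (a : ι → H) (A : Set ι) : IsClosed (qpConeSet a A) := by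
  classical
  have key : qpConeSet a A
      = ⋃ s ∈ {s : Finset ι | ↑s ⊆ A ∧ LinearIndependent ℝ (fun i : s => a i)},
      (fun u : (↥s → ℝ) => ∑ i : s, u i • a (i : ι)) '' {u | ∀ i, 0 ≤ u i} := by
    ext x
    simp only [qpConeSet, Set.mem_setOf_eq, Set.mem_iUnion, Set.mem_image, Set.mem_setOf_eq,
      exists_prop]
    constructor
    · rintro ⟨t, ht0, htA, rfl⟩
      obtain ⟨s', hs'sub, hli, u, hu0, huz, husum⟩ :=
        qpAux_cone_caratheodory a (Finset.univ.filter (· ∈ A)) t ht0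
          (fun i hi => htA i (by simpa using hi))
      refine ⟨s', ⟨fun i hi => by
          simpa using (Finset.mem_filter.1 (hs'sub hi)).2, hli⟩,
        fun i => u i, fun i => hu0 i, ?_⟩
      rw [← husum, ← Finset.sum_subset (Finset.subset_univ s')
        (fun i _ hi => by rw [huz i hi, zero_smul])]
      exact (Finset.sum_attach s' fun i => u i • a i)
    · rintro ⟨s, ⟨hsA, -⟩, u, hu0, rfl⟩
      refine ⟨fun i => if h : i ∈ s then u ⟨i, h⟩ else 0, ?_, ?_, ?_⟩
      · intro i; by_cases h : i ∈ s <;> simp [h]; exact hu0 _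
      · intro i hi; exact dif_neg fun h => hi (hsA h)
      · rw [← Finset.sum_subset (Finset.subset_univ s)
          (fun i _ hi => by simp [dif_neg hi]),
          ← Finset.sum_attach s fun i => (if h : i ∈ s then u ⟨i, h⟩ else 0) • a i]
        exact Finset.sum_congr rfl fun i _ => by simp [i.2]
  rw [key]
  refine Set.Finite.isClosed_biUnion (Set.toFinite _) ?_
  rintro s ⟨-, hli⟩
  have horth : IsClosed {u : ↥s → ℝ | ∀ i, 0 ≤ u i} := by
    have : {u : ↥s → ℝ | ∀ i, 0 ≤ u i} = ⋂ i, {u | 0 ≤ u i} := by ext; simp [Set.mem_iInter]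
    rw [this]
    exact isClosed_iInter fun i => isClosed_le continuous_const (continuous_apply i)
  let T : (↥s → ℝ) →ₗ[ℝ] H :=
    { toFun := fun u => ∑ i : s, u i • a (i : ι)
      map_add' := fun u v => by simp [add_smul, Finset.sum_add_distrib]
      map_smul' := fun c u => by simp [smul_smul, Finset.smul_sum] }
  have hker : LinearMap.ker T = ⊥ := by
    rw [LinearMap.ker_eq_bot']
    intro u hu
    have := Fintype.linearIndependent_iff.1 hli u hu
    funext i; exact this i
  exact ((LinearMap.isClosedEmbedding_of_injective hker).isClosedMap) _ horth

/-- Farkas' lemma. -/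
lemma qpAux_farkas (a : ι → H) (A : Set ι) (g : H)
    (h : ∀ d : H, (∀ i ∈ A, 0 ≤ ⟪a i, d⟫) → 0 ≤ ⟪g, d⟫) :
    ∃ t : ι → ℝ, (∀ i, 0 ≤ t i) ∧ (∀ i ∉ A, t i = 0) ∧ g = ∑ i, t i • a i := by
  classical
  set K : ConvexCone ℝ H :=
    { carrier := qpConeSet a A
      smul_mem' := by
        rintro c hc x ⟨t, ht0, htA, rfl⟩
        exact ⟨fun i => c * t i, fun i => mul_nonneg hc.le (ht0 i),
          fun i hi => by simp [htA i hi],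
          by rw [Finset.smul_sum]; exact Finset.sum_congr rfl fun i _ => (smul_smul c (t i) _)⟩
      add_mem' := by
        rintro x ⟨t, ht0, htA, rfl⟩ y ⟨u, hu0, huA, rfl⟩
        exact ⟨fun i => t i + u i, fun i => add_nonneg (ht0 i) (hu0 i),
          fun i hi => by simp [htA i hi, huA i hi],
          by rw [← Finset.sum_add_distrib]
             exact Finset.sum_congr rfl fun i _ => (add_smul _ _ _).symm⟩ }
  by_contra hg
  have hgK : g ∉ K := fun hmem => by
    obtain ⟨t, h1, h2, h3⟩ := hmem
    exact hg ⟨t, h1, h2, h3⟩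
  have hKne : (K : Set H).Nonempty :=
    ⟨0, ⟨fun _ => 0, fun _ => le_refl 0, fun _ _ => rfl, by simp⟩⟩
  obtain ⟨y, hy1, hy2⟩ :=
    ProperCone.hyperplane_separation' (x₀ := g)
      ⟨K.toPointedCone ⟨fun _ => 0, fun _ => le_refl 0, fun _ _ => rfl, by simp⟩,
        qpAux_isClosed_coneSet a A⟩ hgK
  have : 0 ≤ ⟪g, y⟫ := by
    refine h y fun i hi => hy1 (a i) ?_
    exact ⟨fun j => if j = i then 1 else 0,
      fun j => by dsimp only; split <;> norm_num,
      fun j hj => if_neg (fun hji => hj (by rw [hji]; exact hi)),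
      by simp [ite_smul]⟩
  linarith

section GradHelp
variable {H : Type*} [NormedAddCommGroup H] [InnerProductSpace ℝ H] [CompleteSpace H]

lemma qpAux_hasDerivAt_along_line (fw : H → ℝ) (g x d : H) (hg : HasGradientAt fw g x) :
    HasDerivAt (fun s : ℝ => fw (x + s • d)) ⟪g, d⟫ 0 := by
  have hf' : HasFDerivAt fw (InnerProductSpace.toDual ℝ H g) x :=
    hasGradientAt_iff_hasFDerivAt.1 hg
  have hγ : HasDerivAt (fun s : ℝ => x + s • d) d 0 := by
    simpa using ((hasDerivAt_id (0:ℝ)).smul_const d).const_add x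
  have hf'' : HasFDerivAt fw (InnerProductSpace.toDual ℝ H g) ((fun s : ℝ => x + s • d) 0) := by
    simpa using hf'
  have hcomp := hf''.comp_hasDerivAt (x := (0:ℝ)) hγ
  simpa [InnerProductSpace.toDual_apply_apply, Function.comp_def] using hcomp

lemma qpAux_grad_ineq (fw : H → ℝ) (hconv : ConvexOn ℝ Set.univ fw)
    (hdiff : Differentiable ℝ fw) (x y : H) : ⟪gradient fw x, y - x⟫ ≤ fw y - fw x := by
  set φ : ℝ → ℝ := fun s => fw (x + s • (y - x)) with hφ
  have hder : HasDerivAt φ ⟪gradient fw x, y - x⟫ 0 :=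
    qpAux_hasDerivAt_along_line fw _ x (y - x) (hdiff x).hasGradientAt
  have hφconv : ConvexOn ℝ Set.univ φ := by
    have h1 := hconv.comp_affineMap (AffineMap.lineMap x y : ℝ →ᵃ[ℝ] H)
    have h2 : φ = fw ∘ (AffineMap.lineMap x y : ℝ →ᵃ[ℝ] H) := by
      funext s
      simp only [hφ, Function.comp_apply, AffineMap.lineMap_apply_module]
      congr 1
      rw [smul_sub, sub_smul, one_smul]
      abel
    rw [h2]
    simpa using h1
  have := qpAux_deriv_le_sub_of_convexOn hφconv hder
  simpa [hφ] using this

end GradHelp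
end Helpers

/-- The slice of a set `C ⊆ E × F` at parameter `w`. -/
def Slice {E F : Type*} (C : Set (E × F)) (w : F) : Set E := {x | (x, w) ∈ C}

/-- The solution graph of a convex QP with polyhedral constraints is the union, over
subsets `L` of the constraints, of the sets where the constraints in `L` are active and
the partial gradient lies in the conic hull of the active normals. -/
theorem qp_solGraph_eq_union {n m l : ℕ}
    (f : EuclideanSpace ℝ (Fin n) × EuclideanSpace ℝ (Fin m) → ℝ)
    (Q : EuclideanSpace ℝ (Fin n) →L[ℝ] EuclideanSpace ℝ (Fin n))
    (R : EuclideanSpace ℝ (Fin m) →L[ℝ] EuclideanSpace ℝ (Fin n))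
    (q : EuclideanSpace ℝ (Fin n))
    (hconv : ∀ w, ConvexOn ℝ Set.univ fun x => f (x, w))
    (hdiff : ∀ w, Differentiable ℝ fun x => f (x, w))
    (hgrad : ∀ x w, gradient (fun y => f (y, w)) x = Q x + R w + q)
    (a : Fin l → EuclideanSpace ℝ (Fin n)) (b : Fin l → EuclideanSpace ℝ (Fin m))
    (c : Fin l → ℝ)
    (C : Set (EuclideanSpace ℝ (Fin n) × EuclideanSpace ℝ (Fin m)))
    (hC : C = ⋂ i, {p : EuclideanSpace ℝ (Fin n) × EuclideanSpace ℝ (Fin m) |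
      c i ≤ ⟪a i, p.1⟫ + ⟪b i, p.2⟫})
    (hne : C.Nonempty) :
    {p ∈ C | ∀ y ∈ Slice C p.2, f p ≤ f (y, p.2)} =
      ⋃ L : Set (Fin l),
        {p ∈ C | (∀ i ∈ L, ⟪a i, p.1⟫ + ⟪b i, p.2⟫ = c i) ∧
          ∃ t : Fin l → ℝ, (∀ i, 0 ≤ t i) ∧ (∀ i ∉ L, t i = 0) ∧
            Q p.1 + R p.2 + q = ∑ i, t i • a i} := by
  have hmemC : ∀ p : EuclideanSpace ℝ (Fin n) × EuclideanSpace ℝ (Fin m),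
      p ∈ C ↔ ∀ i, c i ≤ ⟪a i, p.1⟫ + ⟪b i, p.2⟫ := by
    intro p; rw [hC]; simp [Set.mem_iInter]
  ext ⟨x, w⟩
  simp only [Set.mem_sep_iff, Set.mem_iUnion]
  constructor
  · rintro ⟨hpC, hmin⟩
    set A : Set (Fin l) := {i | ⟪a i, x⟫ + ⟪b i, w⟫ = c i} with hA
    have hFark : ∀ d, (∀ i ∈ A, 0 ≤ ⟪a i, d⟫) → 0 ≤ ⟪Q x + R w + q, d⟫ := by
      intro d hd
      have hgradAt : HasGradientAt (fun z => f (z, w)) (Q x + R w + q) x := by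
        have := ((hdiff w) x).hasGradientAt
        rwa [hgrad x w] at this
      have hder : HasDerivAt (fun s : ℝ => f (x + s • d, w)) ⟪Q x + R w + q, d⟫ 0 :=
        qpAux_hasDerivAt_along_line (fun z => f (z, w)) _ x d hgradAt
      refine qpAux_deriv_nonneg_of_eventually_min hder ?_
      have hfeas : ∀ᶠ s in 𝓝[>] (0:ℝ), (x + s • d, w) ∈ C := by
        have : ∀ᶠ s in 𝓝[>] (0:ℝ), ∀ i, c i ≤ ⟪a i, x + s • d⟫ + ⟪b i, w⟫ := by
          rw [Filter.eventually_all]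
          intro i
          by_cases hi : i ∈ A
          · filter_upwards [self_mem_nhdsWithin] with s hs
            have hinner : ⟪a i, x + s • d⟫ = ⟪a i, x⟫ + s * ⟪a i, d⟫ := by
              rw [inner_add_right, real_inner_smul_right]
            have h1 : ⟪a i, x⟫ + ⟪b i, w⟫ = c i := hi
            have h2 : 0 ≤ s * ⟪a i, d⟫ :=
              mul_nonneg (le_of_lt (by exact hs)) (hd i hi)
            rw [hinner]; linarith
          · have hlt : c i < ⟪a i, x⟫ + ⟪b i, w⟫ :=
              lt_of_le_of_ne ((hmemC _).1 hpC i) (fun h => hi h.symm)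
            have hcont : Continuous fun s : ℝ => ⟪a i, x + s • d⟫ + ⟪b i, w⟫ :=
              ((continuous_const.inner (continuous_const.add
                (continuous_id.smul continuous_const)))).add continuous_const
            have hlt0 : c i < ⟪a i, x + (0:ℝ) • d⟫ + ⟪b i, w⟫ := by simpa using hlt
            have hmem : {s : ℝ | c i < ⟪a i, x + s • d⟫ + ⟪b i, w⟫} ∈ 𝓝 (0:ℝ) :=
              hcont.continuousAt.preimage_mem_nhds (Ioi_mem_nhds hlt0)
            filter_upwards [nhdsWithin_le_nhds hmem] with s hs using le_of_lt hs
        filter_upwards [this] with s hs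
        exact (hmemC _).2 fun i => hs i
      filter_upwards [hfeas] with s hs
      have := hmin (x + s • d) hs
      simpa using this
    obtain ⟨t, ht0, htA, hteq⟩ := qpAux_farkas a A (Q x + R w + q) hFark
    exact ⟨A, hpC, fun i hi => hi, t, ht0, htA, hteq⟩
  · rintro ⟨L, hpC, hact, t, ht0, htL, hteq⟩
    refine ⟨hpC, ?_⟩
    intro y hy
    have hy' : ∀ i, c i ≤ ⟪a i, y⟫ + ⟪b i, w⟫ := (hmemC _).1 hy
    have hineq := qpAux_grad_ineq (fun z => f (z, w)) (hconv w) (hdiff w) x y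
    rw [hgrad x w, hteq] at hineq
    have hsum : 0 ≤ ⟪∑ i, t i • a i, y - x⟫ := by
      rw [sum_inner]
      refine Finset.sum_nonneg fun i _ => ?_
      rw [real_inner_smul_left]
      by_cases hi : i ∈ L
      · refine mul_nonneg (ht0 i) ?_
        have h1 : ⟪a i, x⟫ + ⟪b i, w⟫ = c i := hact i hi
        have h2 := hy' i
        rw [inner_sub_right]
        linarith
      · simp [htL i hi]
    have : f (x, w) ≤ f (y, w) := by linarith
    simpa using this
end

section
/- Let Q be symmetric positive semidefinite, and consider the QP of minimizing ½yᵀQy + qᵀy over the closed polyhedron {y : Ay + b ≥ 0}. Fix a feasible x with active index set I_p = {i : (Ax+b)_i = 0} and a multiplier λ* certifying optimality (λ* ≥ 0, λ*_i = 0 for i ∉ I_p, Qx + q = Aᵀλ*). For any subset I_a ⊆ I_p containing the strongly active indices {i ∈ I_p : λ*_i > 0}, the set H(I_a) = {(y,λ) : Qy + q = Aᵀλ, (Ay+b)_i = 0 for i ∈ I_a, (Ay+b)_i ≥ 0 for i ∉ I_a, λ_i ≥ 0 for i ∈ I_a, λ_i = 0 for i ∉ I_a} is a nonempty closed polyhedron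 in ℝⁿ × ℝᵐ containing (x, λ*), and every (y,λ) ∈ H(I_a) satisfies the KKT conditions, so y is a global minimizer of the QP. -/
open Matrix

/-- A polyhedron in `(Fin n → ℝ) × (Fin m → ℝ)`: a finite intersection of closed
halfspaces. -/
def IsPolyPi {n m : ℕ} (S : Set ((Fin n → ℝ) × (Fin m → ℝ))) : Prop :=
  ∃ (k : ℕ) (u : Fin k → Fin n → ℝ) (v : Fin k → Fin m → ℝ) (w : Fin k → ℝ),
    S = ⋂ i, {p : (Fin n → ℝ) × (Fin m → ℝ) | w i ≤ u i ⬝ᵥ p.1 + v i ⬝ᵥ p.2}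

lemma isPolyPi_of_iInter {n m : ℕ} {ι : Type} [Fintype ι]
    (U : ι → Fin n → ℝ) (V : ι → Fin m → ℝ) (W : ι → ℝ)
    {S : Set ((Fin n → ℝ) × (Fin m → ℝ))}
    (h : S = ⋂ j, {p : (Fin n → ℝ) × (Fin m → ℝ) | W j ≤ U j ⬝ᵥ p.1 + V j ⬝ᵥ p.2}) :
    IsPolyPi S := by
  let e := Fintype.equivFin ι
  refine ⟨Fintype.card ι, U ∘ e.symm, V ∘ e.symm, W ∘ e.symm, ?_⟩
  rw [h]
  exact (e.symm.surjective.iInter_comp _).symm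

lemma IsPolyPi.isClosed {n m : ℕ} {S : Set ((Fin n → ℝ) × (Fin m → ℝ))}
    (h : IsPolyPi S) : IsClosed S := by
  obtain ⟨k, u, v, w, rfl⟩ := h
  refine isClosed_iInter fun i => isClosed_le continuous_const ?_
  unfold dotProduct
  fun_prop

lemma kkt_opt {n m : ℕ} (Q : Matrix (Fin n) (Fin n) ℝ) (hQ : Q.PosSemidef)
    (q : Fin n → ℝ) (A : Matrix (Fin m) (Fin n) ℝ) (b : Fin m → ℝ)
    (y : Fin n → ℝ) (l : Fin m → ℝ)
    (hstat : Q.mulVec y + q = A.transpose.mulVec l)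
    (hfeas : ∀ i, 0 ≤ (A.mulVec y + b) i) (hl : ∀ i, 0 ≤ l i)
    (hc : ∀ i, l i * (A.mulVec y + b) i = 0)
    (z : Fin n → ℝ) (hz : ∀ i, 0 ≤ (A.mulVec z + b) i) :
    (1 / 2) * (y ⬝ᵥ Q.mulVec y) + q ⬝ᵥ y ≤ (1 / 2) * (z ⬝ᵥ Q.mulVec z) + q ⬝ᵥ z := by
  have hQt : Qᵀ = Q := hQ.1
  have hsym : ∀ a c : Fin n → ℝ, a ⬝ᵥ Q.mulVec c = c ⬝ᵥ Q.mulVec a := by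
    intro a c
    rw [dotProduct_mulVec, ← mulVec_transpose, hQt, dotProduct_comm]
  have e5 : 0 ≤ (z - y) ⬝ᵥ Q.mulVec (z - y) := by simpa using hQ.dotProduct_mulVec_nonneg (z - y)
  have e1 : (z - y) ⬝ᵥ Q.mulVec (z - y)
      = z ⬝ᵥ Q.mulVec z - (y ⬝ᵥ Q.mulVec z) - ((y ⬝ᵥ Q.mulVec z) - y ⬝ᵥ Q.mulVec y) := by
    rw [mulVec_sub, dotProduct_sub, sub_dotProduct, sub_dotProduct, hsym z y]
  have e3 : l ⬝ᵥ (A.mulVec y + b) = 0 := by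
    rw [dotProduct]
    exact Finset.sum_eq_zero fun i _ => hc i
  have e4 : 0 ≤ l ⬝ᵥ (A.mulVec z + b) := by
    rw [dotProduct]
    exact Finset.sum_nonneg fun i _ => mul_nonneg (hl i) (hz i)
  have e2 : (Q.mulVec y + q) ⬝ᵥ (z - y) = l ⬝ᵥ (A.mulVec z + b) - l ⬝ᵥ (A.mulVec y + b) := by
    rw [hstat, mulVec_transpose, ← dotProduct_mulVec, mulVec_sub, dotProduct_sub,
      dotProduct_add, dotProduct_add]
    ring
  have e6 : (Q.mulVec y + q) ⬝ᵥ (z - y)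
      = y ⬝ᵥ Q.mulVec z - y ⬝ᵥ Q.mulVec y + (q ⬝ᵥ z - q ⬝ᵥ y) := by
    rw [add_dotProduct, dotProduct_sub, dotProduct_sub, dotProduct_comm (Q.mulVec y) z,
      hsym z y, dotProduct_comm (Q.mulVec y) y]
  linarith

lemma single_dot {m : ℕ} (i : Fin m) (v : Fin m → ℝ) : Pi.single i (1:ℝ) ⬝ᵥ v = v i := by
  simp [dotProduct, Pi.single_apply]

/-- The polyhedral pieces of the QP solution graph enumerated in Algorithm 2: given a
KKT point `(x, λ*)` and any active set `I_a` containing the strongly active indices,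
the set `H(I_a)` is a closed polyhedron containing `(x, λ*)`, and every point of it
satisfies the KKT conditions, hence its primal part is a global minimizer of the QP. -/
theorem qp_solution_piece {n m : ℕ} (Q : Matrix (Fin n) (Fin n) ℝ) (hQ : Q.PosSemidef)
    (q : Fin n → ℝ) (A : Matrix (Fin m) (Fin n) ℝ) (b : Fin m → ℝ)
    (x : Fin n → ℝ) (hx : ∀ i, 0 ≤ (A.mulVec x + b) i)
    (lam : Fin m → ℝ) (hlam : ∀ i, 0 ≤ lam i)
    (hcomp : ∀ i, (A.mulVec x + b) i ≠ 0 → lam i = 0)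
    (hstat : Q.mulVec x + q = A.transpose.mulVec lam)
    (Ia : Set (Fin m)) (hIa : ∀ i ∈ Ia, (A.mulVec x + b) i = 0)
    (hstrong : ∀ i, 0 < lam i → i ∈ Ia) :
    (x, lam) ∈ {p : (Fin n → ℝ) × (Fin m → ℝ) |
        Q.mulVec p.1 + q = A.transpose.mulVec p.2 ∧
        (∀ i ∈ Ia, (A.mulVec p.1 + b) i = 0) ∧
        (∀ i ∉ Ia, 0 ≤ (A.mulVec p.1 + b) i) ∧
        (∀ i ∈ Ia, 0 ≤ p.2 i) ∧ (∀ i ∉ Ia, p.2 i = 0)} ∧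
      IsClosed {p : (Fin n → ℝ) × (Fin m → ℝ) |
        Q.mulVec p.1 + q = A.transpose.mulVec p.2 ∧
        (∀ i ∈ Ia, (A.mulVec p.1 + b) i = 0) ∧
        (∀ i ∉ Ia, 0 ≤ (A.mulVec p.1 + b) i) ∧
        (∀ i ∈ Ia, 0 ≤ p.2 i) ∧ (∀ i ∉ Ia, p.2 i = 0)} ∧
      IsPolyPi {p : (Fin n → ℝ) × (Fin m → ℝ) |
        Q.mulVec p.1 + q = A.transpose.mulVec p.2 ∧
        (∀ i ∈ Ia, (A.mulVec p.1 + b) i = 0) ∧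
        (∀ i ∉ Ia, 0 ≤ (A.mulVec p.1 + b) i) ∧
        (∀ i ∈ Ia, 0 ≤ p.2 i) ∧ (∀ i ∉ Ia, p.2 i = 0)} ∧
      ∀ p : (Fin n → ℝ) × (Fin m → ℝ),
        (Q.mulVec p.1 + q = A.transpose.mulVec p.2 ∧
          (∀ i ∈ Ia, (A.mulVec p.1 + b) i = 0) ∧
          (∀ i ∉ Ia, 0 ≤ (A.mulVec p.1 + b) i) ∧
          (∀ i ∈ Ia, 0 ≤ p.2 i) ∧ (∀ i ∉ Ia, p.2 i = 0)) →
        ∀ z : Fin n → ℝ, (∀ i, 0 ≤ (A.mulVec z + b) i) →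
          (1 / 2) * (p.1 ⬝ᵥ Q.mulVec p.1) + q ⬝ᵥ p.1 ≤
            (1 / 2) * (z ⬝ᵥ Q.mulVec z) + q ⬝ᵥ z := by
  classical
  have hpoly : IsPolyPi {p : (Fin n → ℝ) × (Fin m → ℝ) |
      Q.mulVec p.1 + q = A.transpose.mulVec p.2 ∧
      (∀ i ∈ Ia, (A.mulVec p.1 + b) i = 0) ∧
      (∀ i ∉ Ia, 0 ≤ (A.mulVec p.1 + b) i) ∧
      (∀ i ∈ Ia, 0 ≤ p.2 i) ∧ (∀ i ∉ Ia, p.2 i = 0)} := by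
    refine isPolyPi_of_iInter
      (ι := (Fin n ⊕ Fin n) ⊕ (Fin m ⊕ Fin m) ⊕ (Fin m ⊕ Fin m))
      (fun j => match j with
        | .inl (.inl j) => Q j
        | .inl (.inr j) => -(Q j)
        | .inr (.inl (.inl i)) => A i
        | .inr (.inl (.inr i)) => if i ∈ Ia then -(A i) else 0
        | .inr (.inr _) => 0)
      (fun j => match j with
        | .inl (.inl j) => fun i => -(A i j)
        | .inl (.inr j) => fun i => A i j
        | .inr (.inl _) => 0
        | .inr (.inr (.inl i)) => Pi.single i 1
        | .inr (.inr (.inr i)) => if i ∈ Ia then 0 else -(Pi.single i 1))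
      (fun j => match j with
        | .inl (.inl j) => -(q j)
        | .inl (.inr j) => q j
        | .inr (.inl (.inl i)) => -(b i)
        | .inr (.inl (.inr i)) => if i ∈ Ia then b i else 0
        | .inr (.inr _) => 0) ?_
    ext ⟨y, l⟩
    simp only [Set.mem_setOf_eq, Set.mem_iInter]
    constructor
    · rintro ⟨h1, h2, h3, h4, h5⟩ j
      have h1' : ∀ j, (Q.mulVec y) j + q j = (Aᵀ.mulVec l) j := fun j => congrFun h1 j
      simp only [mulVec, dotProduct, transpose_apply, Pi.add_apply] at h1'
      rcases j with (j | j) | ((i | i) | (i | i)) <;>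
        simp only [Set.mem_setOf_eq, dotProduct, Pi.neg_apply, Pi.zero_apply, zero_mul,
          neg_mul, Finset.sum_neg_distrib, Finset.sum_const_zero, add_zero, zero_add]
      · have := h1' j; linarith
      · have := h1' j; linarith
      · have h := by_cases (fun hi : i ∈ Ia => le_of_eq (h2 i hi).symm) (fun hi => h3 i hi)
        simp only [mulVec, dotProduct, Pi.add_apply] at h
        linarith
      · by_cases hi : i ∈ Ia
        · have h := h2 i hi
          simp only [mulVec, dotProduct, Pi.add_apply] at h
          simp only [if_pos hi, Pi.neg_apply, neg_mul, Finset.sum_neg_distrib]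
          linarith
        · simp [if_neg hi]
      · have h : 0 ≤ l i := by
          by_cases hi : i ∈ Ia
          · exact h4 i hi
          · exact le_of_eq (h5 i hi).symm
        have hs := single_dot i l
        simp only [dotProduct] at hs
        rw [hs]
        linarith
      · by_cases hi : i ∈ Ia
        · simp [if_pos hi]
        · have h := h5 i hi
          have hs := single_dot i l
          simp only [dotProduct] at hs
          simp only [if_neg hi, Pi.neg_apply, neg_mul, Finset.sum_neg_distrib]
          rw [hs, h]
          simp
    · intro h
      have hst : ∀ j : Fin n, (Q.mulVec y) j + q j = (Aᵀ.mulVec l) j := by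
        intro j
        have a := h (.inl (.inl j))
        have c := h (.inl (.inr j))
        simp only [Set.mem_setOf_eq, dotProduct, Pi.neg_apply, neg_mul,
          Finset.sum_neg_distrib] at a c
        simp only [mulVec, dotProduct, transpose_apply, Pi.add_apply]
        linarith
      have hrow : ∀ i : Fin m, 0 ≤ (A.mulVec y + b) i := by
        intro i
        have a := h (.inr (.inl (.inl i)))
        simp only [Set.mem_setOf_eq, dotProduct, Pi.zero_apply, zero_mul,
          Finset.sum_const_zero, add_zero] at a
        simp only [mulVec, dotProduct, Pi.add_apply]
        linarith
      have hlp : ∀ i : Fin m, 0 ≤ l i := by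
        intro i
        have a := h (.inr (.inr (.inl i)))
        have hs := single_dot i l
        simp only [Set.mem_setOf_eq, dotProduct, Pi.zero_apply, zero_mul,
          Finset.sum_const_zero, zero_add] at a
        simp only [dotProduct] at hs
        rw [hs] at a
        exact a
      refine ⟨?_, ?_, fun i hi => hrow i, fun i hi => hlp i, ?_⟩
      · funext j
        exact hst j
      · intro i hi
        have a := h (.inr (.inl (.inr i)))
        simp only [Set.mem_setOf_eq, if_pos hi, dotProduct, Pi.neg_apply, neg_mul,
          Finset.sum_neg_distrib, Pi.zero_apply, zero_mul, Finset.sum_const_zero,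
          add_zero] at a
        have hr := hrow i
        simp only [mulVec, dotProduct, Pi.add_apply] at hr ⊢
        linarith
      · intro i hi
        have a := h (.inr (.inr (.inr i)))
        have hs := single_dot i l
        simp only [Set.mem_setOf_eq, if_neg hi, dotProduct, Pi.neg_apply, neg_mul,
          Finset.sum_neg_distrib, Pi.zero_apply, zero_mul, Finset.sum_const_zero,
          zero_add] at a
        simp only [dotProduct] at hs
        rw [hs] at a
        have := hlp i
        linarith
  refine ⟨?_, hpoly.isClosed, hpoly, ?_⟩
  · refine ⟨hstat, hIa, fun i _ => hx i, fun i _ => hlam i, fun i hi => ?_⟩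
    have h1 : ¬ 0 < lam i := fun h => hi (hstrong i h)
    linarith [hlam i]
  · rintro ⟨y, l⟩ ⟨h1, h2, h3, h4, h5⟩ z hz
    refine kkt_opt Q hQ q A b y l h1 ?_ ?_ ?_ z hz
    · intro i
      by_cases hi : i ∈ Ia
      · exact le_of_eq (h2 i hi).symm
      · exact h3 i hi
    · intro i
      by_cases hi : i ∈ Ia
      · exact h4 i hi
      · exact le_of_eq (h5 i hi).symm
    · intro i
      by_cases hi : i ∈ Ia
      · rw [show (A.mulVec y + b) i = 0 from h2 i hi, mul_zero]
      · rw [show l i = 0 from h5 i hi, zero_mul]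
end
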